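/- Let Φ = (φ_{t,ℓ}) ∈ so_n(k[[ℏ]]) be antisymmetric and let σ_Φ be the 2-cocycle on F_ℏ[[GL_n^p]] obtained by evaluation against the twist F_Φ = exp(ℏ·2^{−1} Σ_{t,ℓ=1}^n φ_{t,ℓ} Γ_t ⊗ Γ_ℓ) of U_ℏ(gl_n^p), i.e. σ_Φ(φ,ψ) := ⟨φ ⊗ ψ, F_Φ⟩. Then for all i,r,ℓ,h ∈ {1,…,n}: σ_Φ(x_{i,r}, x_{ℓ,h}) = δ_{i,r} δ_{ℓ,h} e^{ℏ·2^{−1}φ_{i,ℓ}}, and consequently the σ_Φ-deformed product on F_ℏ[[GL_n^p]] satisfies x_{r,s} ·_{σ_Φ} x_{ℓ,t} = e^{ℏ·2^{−1}(φ_{r,ℓ} − φ_{s,t})} x_{r,s} x_{ℓ,t} for all r,s,ℓ,t ∈ {1,…,n}. -/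

import Mathlib

/-!
Formalization framework for (multiparameter) quantum general linear supergroups,
following Gavarini–Paolini, "Multiparameter Quantum General Linear Supergroup".

We work over `k[[ℏ]] := PowerSeries k` for a field `k` of characteristic zero.
"Super" (ℤ₂-graded) structures are encoded by a family of submodules
`g : ZMod 2 → Submodule S A` (the homogeneous components), and the Koszul-sign
multiplication on `A ⊗ A` is encoded by a bilinear map `m2` together with its
characterizing property on homogeneous pure tensors (`IsSuperMul`).
"Topological" notions (ℏ-adic or I-adic completeness, topological generation,
topological bases) are rendered through the corresponding adic filtrations.
-/

open scoped TensorProduct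
open Finset

noncomputable section

namespace QGLS

/-- The sign `(−1)^a` for a parity `a : ZMod 2`. -/
def sg (S : Type) [Ring S] (a : ZMod 2) : S := if a = 0 then 1 else -1

/-- `p_{i,j} := p(i) + p(j)`. -/
def pp (p : ℕ → ZMod 2) (i j : ℕ) : ZMod 2 := p i + p j

section Generic

variable (S : Type) [CommRing S]

section Alg
variable (A : Type) [Ring A] [Algebra S A]

/-- A ℤ₂-grading (super-structure) on an `S`-algebra `A`, by submodules. -/
structure SuperGrading (g : ZMod 2 → Submodule S A) : Prop where
  one_mem : (1 : A) ∈ g 0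
  mul_mem : ∀ {i j : ZMod 2} {x y : A}, x ∈ g i → y ∈ g j → x * y ∈ g (i + j)
  sup_eq : g 0 ⊔ g 1 = ⊤
  inf_eq : g 0 ⊓ g 1 = ⊥

/-- `m2` is the Koszul-signed ("super") multiplication on `A ⊗[S] A`:
`(a ⊗ b)(c ⊗ d) = (−1)^{|b||c|} (ac ⊗ bd)` on homogeneous elements. -/
def IsSuperMul (g : ZMod 2 → Submodule S A)
    (m2 : (A ⊗[S] A) →ₗ[S] (A ⊗[S] A) →ₗ[S] (A ⊗[S] A)) : Prop :=
  ∀ (pb pc : ZMod 2) (a b c d : A), b ∈ g pb → c ∈ g pc →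
    m2 (a ⊗ₜ[S] b) (c ⊗ₜ[S] d) = sg S (pb * pc) • ((a * c) ⊗ₜ[S] (b * d))

/-- The axioms of a (ℤ₂-graded) superbialgebra over `S`, with coproduct `cop`
and counit `cou`; `m2` is the super multiplication of `A ⊗ A`. -/
structure IsSuperBialg (g : ZMod 2 → Submodule S A)
    (m2 : (A ⊗[S] A) →ₗ[S] (A ⊗[S] A) →ₗ[S] (A ⊗[S] A))
    (cop : A →ₗ[S] A ⊗[S] A) (cou : A →ₗ[S] S) : Prop where
  grading : SuperGrading S A g
  superMul : IsSuperMul S A g m2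
  comul_one : cop 1 = (1 : A) ⊗ₜ[S] (1 : A)
  comul_mul : ∀ x y : A, cop (x * y) = m2 (cop x) (cop y)
  counit_one : cou 1 = 1
  counit_mul : ∀ x y : A, cou (x * y) = cou x * cou y
  coassoc : ∀ x : A,
    (TensorProduct.assoc S A A A)
        ((TensorProduct.map cop (LinearMap.id : A →ₗ[S] A)) (cop x))
      = (TensorProduct.map (LinearMap.id : A →ₗ[S] A) cop) (cop x)
  counit_comul : ∀ x : A,
    (TensorProduct.lid S A) ((TensorProduct.map cou (LinearMap.id : A →ₗ[S] A)) (cop x)) = x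
  comul_counit : ∀ x : A,
    (TensorProduct.rid S A) ((TensorProduct.map (LinearMap.id : A →ₗ[S] A) cou) (cop x)) = x
  comul_parity : ∀ i : ZMod 2, ∀ x ∈ g i, cop x ∈
    Submodule.span S {t : A ⊗[S] A | ∃ j : ZMod 2, ∃ y ∈ g j, ∃ z ∈ g (i + j), t = y ⊗ₜ[S] z}
  counit_odd : ∀ x ∈ g 1, cou x = 0

/-- `St` is an antipode for the superbialgebra `(A, cop, cou)`. -/
def IsAntipode (cop : A →ₗ[S] A ⊗[S] A) (cou : A →ₗ[S] S) (St : A →ₗ[S] A) : Prop :=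
  (∀ x : A, (LinearMap.mul' S A)
      ((TensorProduct.map St (LinearMap.id : A →ₗ[S] A)) (cop x)) = algebraMap S A (cou x)) ∧
  (∀ x : A, (LinearMap.mul' S A)
      ((TensorProduct.map (LinearMap.id : A →ₗ[S] A) St) (cop x)) = algebraMap S A (cou x))

/-- The two-sided ideal generated by a set `T`, as a submodule. -/
def tsi (T : Set A) : Submodule S A :=
  Submodule.span S {x : A | ∃ a b : A, ∃ s ∈ T, x = a * s * b}

/-- `A` is topologically generated by `T` with respect to the filtration `Fl`. -/
def TopGenBy (Fl : ℕ → Submodule S A) (T : Set A) : Prop :=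
  ∀ a : A, ∀ N : ℕ, ∃ b ∈ Algebra.adjoin S T, a - b ∈ Fl N

end Alg

section Mod
variable (M : Type) [AddCommGroup M] [Module S M]

/-- The `r`-adic filtration on a module. -/
def adicFil (r : S) (N : ℕ) : Submodule S M :=
  Submodule.span S {x : M | ∃ y : M, x = r ^ N • y}

/-- Separatedness and completeness with respect to a filtration of submodules. -/
def CompleteWRT (Fl : ℕ → Submodule S M) : Prop :=
  (∀ x : M, (∀ N, x ∈ Fl N) → x = 0) ∧
  (∀ f : ℕ → M, (∀ N, f (N + 1) - f N ∈ Fl N) → ∃ x : M, ∀ N, x - f N ∈ Fl N)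

/-- A representation of a tensor `t ∈ M ⊗ M` as a finite sum of pure tensors
with homogeneous factors (of the prescribed parities). -/
def Rep (g : ZMod 2 → Submodule S M) (t : M ⊗[S] M) (ι : Type) (s : Finset ι)
    (a b : ι → M) (pa pb : ι → ZMod 2) : Prop :=
  t = ∑ i ∈ s, a i ⊗ₜ[S] b i ∧ ∀ i ∈ s, a i ∈ g (pa i) ∧ b i ∈ g (pb i)

/-- A homogeneous representation of the double coproduct `(Δ ⊗ id)(Δ x)`. -/
def Rep3 (g : ZMod 2 → Submodule S M) (cop : M →ₗ[S] M ⊗[S] M) (x : M) (ι : Type)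
    (s : Finset ι) (a b c : ι → M) (pa pb pc : ι → ZMod 2) : Prop :=
  ((TensorProduct.map cop (LinearMap.id : M →ₗ[S] M)) (cop x)
      = ∑ i ∈ s, (a i ⊗ₜ[S] b i) ⊗ₜ[S] c i) ∧
  ∀ i ∈ s, a i ∈ g (pa i) ∧ b i ∈ g (pb i) ∧ c i ∈ g (pc i)

/-- `σ'` is a convolution inverse of the bilinear form `σ` (with Koszul signs). -/
def ConvInverse (g : ZMod 2 → Submodule S M) (cop : M →ₗ[S] M ⊗[S] M) (cou : M →ₗ[S] S)
    (σ σ' : M →ₗ[S] M →ₗ[S] S) : Prop :=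
  ∀ x y : M, ∀ (ι : Type) (s : Finset ι) (a b : ι → M) (pa pb : ι → ZMod 2),
    Rep S M g (cop x) ι s a b pa pb →
    ∀ (ι' : Type) (s' : Finset ι') (c d : ι' → M) (pc pd : ι' → ZMod 2),
      Rep S M g (cop y) ι' s' c d pc pd →
    (∑ i ∈ s, ∑ j ∈ s', sg S (pb i * pc j) * (σ (a i) (c j) * σ' (b i) (d j))
        = cou x * cou y) ∧
    (∑ i ∈ s, ∑ j ∈ s', sg S (pb i * pc j) * (σ' (a i) (c j) * σ (b i) (d j))
        = cou x * cou y)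

/-- `σ` is a (normalized, convolution-invertible) 2-cocycle for the
super-coalgebra-with-multiplication `(M, mul, one, cop, cou)`;
the Sweedler-type identities are expressed through homogeneous representations
of the coproducts (with Koszul signs). -/
structure Is2Cocycle (g : ZMod 2 → Submodule S M) (mul : M → M → M) (one : M)
    (cop : M →ₗ[S] M ⊗[S] M) (cou : M →ₗ[S] S) (σ : M →ₗ[S] M →ₗ[S] S) : Prop where
  norm_right : ∀ x : M, σ x one = cou x
  norm_left : ∀ x : M, σ one x = cou x
  conv_inv : ∃ σ' : M →ₗ[S] M →ₗ[S] S, ConvInverse S M g cop cou σ σ'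
  cocycle : ∀ x y z : M,
    ∀ (ι : Type) (s : Finset ι) (a b : ι → M) (pa pb : ι → ZMod 2),
      Rep S M g (cop x) ι s a b pa pb →
    ∀ (ι' : Type) (s' : Finset ι') (c d : ι' → M) (pc pd : ι' → ZMod 2),
      Rep S M g (cop y) ι' s' c d pc pd →
    ∀ (ι'' : Type) (s'' : Finset ι'') (u v : ι'' → M) (pu pv : ι'' → ZMod 2),
      Rep S M g (cop z) ι'' s'' u v pu pv →
    ∑ i ∈ s, ∑ j ∈ s', sg S (pb i * pc j) * (σ (a i) (c j) * σ (mul (b i) (d j)) z)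
      = ∑ j ∈ s', ∑ l ∈ s'', sg S (pd j * pu l) * (σ (c j) (u l) * σ x (mul (d j) (v l)))

/-- `mulσ` is the 2-cocycle deformation of the product `mul` by the 2-cocycle `σ`
(with convolution inverse `σ'`):  `x ·σ y = σ(x₁,y₁) x₂y₂ σ'(x₃,y₃)`
(with Koszul signs), expressed through homogeneous representations. -/
def IsCocycleDeform (g : ZMod 2 → Submodule S M) (mul : M → M → M)
    (cop : M →ₗ[S] M ⊗[S] M) (σ σ' : M →ₗ[S] M →ₗ[S] S) (mulσ : M → M → M) : Prop :=
  ∀ x y : M,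
    ∀ (ι : Type) (s : Finset ι) (a b c : ι → M) (pa pb pc : ι → ZMod 2),
      Rep3 S M g cop x ι s a b c pa pb pc →
    ∀ (ι' : Type) (s' : Finset ι') (d e f : ι' → M) (pd pe pf : ι' → ZMod 2),
      Rep3 S M g cop y ι' s' d e f pd pe pf →
    mulσ x y = ∑ i ∈ s, ∑ j ∈ s',
      (sg S (pd j * (pb i + pc i) + pe j * pc i) * (σ (a i) (d j) * σ' (c i) (f j)))
        • mul (b i) (e j)

/-- Iterated powers with respect to a bilinear multiplication map. -/
def spow (m2 : M →ₗ[S] M →ₗ[S] M) (one : M) (z : M) : ℕ → M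
  | 0 => one
  | (m + 1) => m2 z (spow m2 one z m)

end Mod

section Pairing
variable (Fc : Type) [Ring Fc] [Algebra S Fc] (Uc : Type) [Ring Uc] [Algebra S Uc]

/-- `B2` extends the pairing `B` to tensor squares with the Koszul sign rule:
`⟨f₁ ⊗ f₂ , u₁ ⊗ u₂⟩ = (−1)^{|f₂||u₁|} ⟨f₁,u₁⟩⟨f₂,u₂⟩`. -/
def IsPairing2 (gF : ZMod 2 → Submodule S Fc) (gU : ZMod 2 → Submodule S Uc)
    (B : Fc →ₗ[S] Uc →ₗ[S] S)
    (B2 : (Fc ⊗[S] Fc) →ₗ[S] (Uc ⊗[S] Uc) →ₗ[S] S) : Prop :=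
  ∀ (pf pu : ZMod 2) (f1 f2 : Fc) (u1 u2 : Uc), f2 ∈ gF pf → u1 ∈ gU pu →
    B2 (f1 ⊗ₜ[S] f2) (u1 ⊗ₜ[S] u2) = sg S (pf * pu) * (B f1 u1 * B f2 u2)

/-- A pairing of superbialgebras: product on one side is dual to coproduct on
the other (with Koszul signs), and units/counits correspond. -/
structure IsBialgPairing (gF : ZMod 2 → Submodule S Fc) (gU : ZMod 2 → Submodule S Uc)
    (copF : Fc →ₗ[S] Fc ⊗[S] Fc) (couF : Fc →ₗ[S] S)
    (copU : Uc →ₗ[S] Uc ⊗[S] Uc) (couU : Uc →ₗ[S] S)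
    (B : Fc →ₗ[S] Uc →ₗ[S] S)
    (B2 : (Fc ⊗[S] Fc) →ₗ[S] (Uc ⊗[S] Uc) →ₗ[S] S) : Prop where
  pair2 : IsPairing2 S Fc Uc gF gU B B2
  mulU : ∀ (f : Fc) (u u' : Uc), B f (u * u') = B2 (copF f) (u ⊗ₜ[S] u')
  mulF : ∀ (f f' : Fc) (u : Uc), B (f * f') u = B2 (f ⊗ₜ[S] f') (copU u)
  oneU : ∀ f : Fc, B f 1 = couF f
  oneF : ∀ u : Uc, B 1 u = couU u

/-- Non-degeneracy of a pairing. -/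
def Nondeg (B : Fc →ₗ[S] Uc →ₗ[S] S) : Prop :=
  (∀ f : Fc, (∀ u : Uc, B f u = 0) → f = 0) ∧
  (∀ u : Uc, (∀ f : Fc, B f u = 0) → u = 0)

end Pairing

end Generic

/-! ## The formal setting: base ring `k[[ℏ]]` -/

section Formal
variable (k : Type) [Field k] [CharZero k]

/-- The base ring `k[[ℏ]]`. -/
abbrev Rk := PowerSeries k

/-- `exp(g)` as a power series (intended for `g` with zero constant term). -/
def expOf (g : Rk k) : Rk k :=
  PowerSeries.mk fun m =>
    ∑ j ∈ Finset.range (m + 1), ((j.factorial : k)⁻¹) * (PowerSeries.coeff m (g ^ j))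

/-- `q := exp ℏ`. -/
def qq : Rk k := expOf k PowerSeries.X

/-- `q⁻¹ = exp (−ℏ)`. -/
def qqInv : Rk k := expOf k (-PowerSeries.X)

/-- `q_s := q^{(−1)^{p(s)}}`. -/
def qpar (p : ℕ → ZMod 2) (s : ℕ) : Rk k := if p s = 0 then qq k else qqInv k

/-- `q_s⁻¹ = q^{−(−1)^{p(s)}}`. -/
def qparInv (p : ℕ → ZMod 2) (s : ℕ) : Rk k := if p s = 0 then qqInv k else qq k

/-- The ℏ-adic filtration on a `k[[ℏ]]`-module. -/
def hFil (M : Type) [AddCommGroup M] [Module (Rk k) M] : ℕ → Submodule (Rk k) M :=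
  adicFil (Rk k) M (PowerSeries.X)

/-- `u = exp(ℏ a)`, expressed through ℏ-adic approximation by the partial sums
`∑_{m<N} (ℏ^m/m!) a^m`. -/
def IsExp (A : Type) [Ring A] [Algebra (Rk k) A] (u a : A) : Prop :=
  ∀ N : ℕ, u - ∑ m ∈ Finset.range N,
      algebraMap (Rk k) A (PowerSeries.C ((m.factorial : k)⁻¹) * PowerSeries.X ^ m) * a ^ m
    ∈ hFil k A N

variable (n : ℕ) (p : ℕ → ZMod 2)

section YamDefs
variable (A : Type) [Ring A] [Algebra (Rk k) A]

/-- `H_i := (−1)^{p(i)} Γ_i − (−1)^{p(i+1)} Γ_{i+1}`. -/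
def Hcar (Γg : ℕ → A) (i : ℕ) : A :=
  sg (Rk k) (p i) • Γg i - sg (Rk k) (p (i + 1)) • Γg (i + 1)

/-- The defining relations (2.1)–(2.7) of Yamane's QUESA `U_ℏ(gl_n^p)`, for elements
`E, Γg, F` of an ℏ-adically complete superalgebra `A`, where `expl a` denotes
`exp(ℏ a)`.  The relation `[E_i,F_j] = δ_{ij} (e^{ℏH_i}−e^{−ℏH_i})/(q_i−q_i⁻¹)` is
stated multiplied through by `q_i − q_i⁻¹` (`A` being ℏ-torsion free). -/
structure YamaneRels (E Γg F : ℕ → A) (expl : A → A) : Prop where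
  relΓΓ : ∀ k' ∈ Finset.Icc 1 n, ∀ l ∈ Finset.Icc 1 n, Γg k' * Γg l = Γg l * Γg k'
  relΓE : ∀ k' ∈ Finset.Icc 1 n, ∀ j ∈ Finset.Icc 1 (n - 1),
    Γg k' * E j - E j * Γg k'
      = (((if k' = j then 1 else 0) - (if k' = j + 1 then 1 else 0) : Rk k)) • E j
  relΓF : ∀ k' ∈ Finset.Icc 1 n, ∀ j ∈ Finset.Icc 1 (n - 1),
    Γg k' * F j - F j * Γg k'
      = (((if k' = j + 1 then 1 else 0) - (if k' = j then 1 else 0) : Rk k)) • F j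
  relEF : ∀ i ∈ Finset.Icc 1 (n - 1), ∀ j ∈ Finset.Icc 1 (n - 1),
    (qpar k p i - qparInv k p i) •
        (E i * F j - sg (Rk k) (pp p i (i + 1) * pp p j (j + 1)) • (F j * E i))
      = (if i = j then (1 : Rk k) else 0) •
          (expl (Hcar k p A Γg i) - expl (-Hcar k p A Γg i))
  relSq : ∀ i ∈ Finset.Icc 1 (n - 1), pp p i (i + 1) = 1 → E i ^ 2 = 0 ∧ F i ^ 2 = 0
  relEE : ∀ i ∈ Finset.Icc 1 (n - 1), ∀ j ∈ Finset.Icc 1 (n - 1), (i + 1 < j ∨ j + 1 < i) →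
    E i * E j = sg (Rk k) (pp p i (i + 1) * pp p j (j + 1)) • (E j * E i)
  relFF : ∀ i ∈ Finset.Icc 1 (n - 1), ∀ j ∈ Finset.Icc 1 (n - 1), (i + 1 < j ∨ j + 1 < i) →
    F i * F j = sg (Rk k) (pp p i (i + 1) * pp p j (j + 1)) • (F j * F i)
  relSerreE : ∀ i ∈ Finset.Icc 1 (n - 1), ∀ j ∈ Finset.Icc 1 (n - 1),
    pp p i (i + 1) = 0 → (j = i + 1 ∨ i = j + 1) →
    E i ^ 2 * E j - (qq k + qqInv k) • (E i * E j * E i) + E j * E i ^ 2 = 0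
  relSerreF : ∀ i ∈ Finset.Icc 1 (n - 1), ∀ j ∈ Finset.Icc 1 (n - 1),
    pp p i (i + 1) = 0 → (j = i + 1 ∨ i = j + 1) →
    F i ^ 2 * F j - (qq k + qqInv k) • (F i * F j * F i) + F j * F i ^ 2 = 0
  relHighE : ∀ i : ℕ, 1 ≤ i → i + 2 ≤ n - 1 → pp p (i + 1) (i + 2) = 1 →
    let a := E i
    let b := E (i + 1)
    let c := E (i + 2)
    let pa := pp p i (i + 1)
    let pb := pp p (i + 1) (i + 2)
    let pc := pp p (i + 2) (i + 3)
    let X1 := a * b - (qpar k p (i + 1) * sg (Rk k) (pa * pb)) • (b * a)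
    let X2 := X1 * c - (qpar k p (i + 2) * sg (Rk k) ((pa + pb) * pc)) • (c * X1)
    X2 * b - sg (Rk k) ((pa + pb + pc) * pb) • (b * X2) = 0
  relHighF : ∀ i : ℕ, 1 ≤ i → i + 2 ≤ n - 1 → pp p (i + 1) (i + 2) = 1 →
    let a := F i
    let b := F (i + 1)
    let c := F (i + 2)
    let pa := pp p i (i + 1)
    let pb := pp p (i + 1) (i + 2)
    let pc := pp p (i + 2) (i + 3)
    let X1 := a * b - (qpar k p (i + 1) * sg (Rk k) (pa * pb)) • (b * a)
    let X2 := X1 * c - (qpar k p (i + 2) * sg (Rk k) ((pa + pb) * pc)) • (c * X1)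
    X2 * b - sg (Rk k) ((pa + pb + pc) * pb) • (b * X2) = 0

end YamDefs

/-- Yamane's QUESA `U_ℏ(gl_n^p)`: an ℏ-adically complete topological superalgebra
over `k[[ℏ]]`, topologically generated by `E_i, Γ_k, F_i` subject to the relations
(2.1)–(2.7), together with its universal property among complete superalgebras. -/
structure YamaneAlg where
  A : Type
  [ringA : Ring A]
  [algA : Algebra (Rk k) A]
  g : ZMod 2 → Submodule (Rk k) A
  grading : SuperGrading (Rk k) A g
  E : ℕ → A
  Γg : ℕ → A
  F : ℕ → A
  /-- `expl a = exp(ℏ a)`. -/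
  expl : A → A
  expl_spec : ∀ a : A, IsExp k A (expl a) a
  parE : ∀ i ∈ Finset.Icc 1 (n - 1), E i ∈ g (pp p i (i + 1))
  parΓ : ∀ s ∈ Finset.Icc 1 n, Γg s ∈ g 0
  parF : ∀ i ∈ Finset.Icc 1 (n - 1), F i ∈ g (pp p i (i + 1))
  rels : YamaneRels k n p A E Γg F expl
  complete : CompleteWRT (Rk k) A (hFil k A)
  torsionfree : ∀ a : A, (PowerSeries.X : Rk k) • a = 0 → a = 0
  topgen : TopGenBy (Rk k) A (hFil k A)
    ({x : A | ∃ i ∈ Finset.Icc 1 (n - 1), x = E i}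
      ∪ {x : A | ∃ s ∈ Finset.Icc 1 n, x = Γg s}
      ∪ {x : A | ∃ i ∈ Finset.Icc 1 (n - 1), x = F i})
  univ : ∀ (B : Type) [Ring B] [Algebra (Rk k) B] (E' Γ' F' : ℕ → B) (expl' : B → B),
    (∀ b : B, IsExp k B (expl' b) b) →
    YamaneRels k n p B E' Γ' F' expl' →
    CompleteWRT (Rk k) B (hFil k B) →
    ∃ φ : A →ₐ[Rk k] B,
      (∀ i ∈ Finset.Icc 1 (n - 1), φ (E i) = E' i) ∧
      (∀ s ∈ Finset.Icc 1 n, φ (Γg s) = Γ' s) ∧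
      (∀ i ∈ Finset.Icc 1 (n - 1), φ (F i) = F' i)

attribute [instance] YamaneAlg.ringA YamaneAlg.algA

/-- The formulas of Theorem 2.4 for the standard Hopf superalgebra structure of
Yamane's QUESA, on the generators. -/
def YamaneHopfFormulas (U : YamaneAlg k n p)
    (cop : U.A →ₗ[Rk k] U.A ⊗[Rk k] U.A) (cou : U.A →ₗ[Rk k] Rk k)
    (St : U.A →ₗ[Rk k] U.A) : Prop :=
  (∀ i ∈ Finset.Icc 1 (n - 1),
      cop (U.E i) = U.E i ⊗ₜ[Rk k] (1 : U.A) + U.expl (Hcar k p U.A U.Γg i) ⊗ₜ[Rk k] U.E i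
    ∧ St (U.E i) = -(U.expl (-Hcar k p U.A U.Γg i) * U.E i)
    ∧ cou (U.E i) = 0) ∧
  (∀ s ∈ Finset.Icc 1 n,
      cop (U.Γg s) = U.Γg s ⊗ₜ[Rk k] (1 : U.A) + (1 : U.A) ⊗ₜ[Rk k] U.Γg s
    ∧ St (U.Γg s) = -U.Γg s
    ∧ cou (U.Γg s) = 0) ∧
  (∀ i ∈ Finset.Icc 1 (n - 1),
      cop (U.F i) = U.F i ⊗ₜ[Rk k] U.expl (-Hcar k p U.A U.Γg i) + (1 : U.A) ⊗ₜ[Rk k] U.F i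
    ∧ St (U.F i) = -(U.F i * U.expl (Hcar k p U.A U.Γg i))
    ∧ cou (U.F i) = 0)

/-- Yamane's QUESA together with its standard topological Hopf superalgebra structure. -/
structure YamaneHopf extends YamaneAlg k n p where
  m2 : (A ⊗[Rk k] A) →ₗ[Rk k] (A ⊗[Rk k] A) →ₗ[Rk k] (A ⊗[Rk k] A)
  cop : A →ₗ[Rk k] A ⊗[Rk k] A
  cou : A →ₗ[Rk k] Rk k
  ant : A →ₗ[Rk k] A
  bialg : IsSuperBialg (Rk k) A g m2 cop cou
  antipode : IsAntipode (Rk k) A cop cou ant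
  formulas : YamaneHopfFormulas k n p toYamaneAlg cop cou ant

/-! ### The QFSHSA `F_ℏ[[GL_n^p]]` -/

section FGLDefs
variable (A : Type) [Ring A] [Algebra (Rk k) A]

/-- The defining relations of `F_ℏ[[GL_n^p]]` (Theorem 3.3(a)). -/
structure FGLRels (x : ℕ → ℕ → A) : Prop where
  sq : ∀ i ∈ Finset.Icc 1 n, ∀ j ∈ Finset.Icc 1 n, pp p i j = 1 → x i j ^ 2 = 0
  row : ∀ i ∈ Finset.Icc 1 n, ∀ j ∈ Finset.Icc 1 n, ∀ k' ∈ Finset.Icc 1 n, j < k' →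
    x i j * x i k' = (sg (Rk k) (pp p i j * pp p i k') * qpar k p i) • (x i k' * x i j)
  col : ∀ i ∈ Finset.Icc 1 n, ∀ h ∈ Finset.Icc 1 n, ∀ j ∈ Finset.Icc 1 n, i < h →
    x i j * x h j = (sg (Rk k) (pp p i j * pp p h j) * qpar k p j) • (x h j * x i j)
  anti : ∀ i ∈ Finset.Icc 1 n, ∀ h ∈ Finset.Icc 1 n, ∀ j ∈ Finset.Icc 1 n,
    ∀ k' ∈ Finset.Icc 1 n, i < h → k' < j →
    x i j * x h k' = sg (Rk k) (pp p i j * pp p h k') • (x h k' * x i j)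
  syn : ∀ i ∈ Finset.Icc 1 n, ∀ h ∈ Finset.Icc 1 n, ∀ j ∈ Finset.Icc 1 n,
    ∀ k' ∈ Finset.Icc 1 n, i < h → j < k' →
    x i j * x h k' = sg (Rk k) (pp p i j * pp p h k') • (x h k' * x i j)
      + (sg (Rk k) (pp p i j * pp p i k') * (qpar k p i - qparInv k p i)) • (x i k' * x h j)

/-- The `I_ℏ`-adic filtration, `I_ℏ` being the two-sided ideal generated by the
`x_{ij} − δ_{ij}` together with `ℏ·1`. -/
def IhFil (x : ℕ → ℕ → A) (N : ℕ) : Submodule (Rk k) A :=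
  (tsi (Rk k) A
    ({a : A | ∃ i ∈ Finset.Icc 1 n, ∃ j ∈ Finset.Icc 1 n,
        a = x i j - (if i = j then (1 : A) else 0)}
      ∪ {(PowerSeries.X : Rk k) • (1 : A)})) ^ N

end FGLDefs

/-- The quantum formal series Hopf superalgebra `F_ℏ[[GL_n^p]]` of Theorem 3.3:
a topological superbialgebra over `k[[ℏ]]`, topologically generated by the
`x_{ij}` subject to the relations (a), `I_ℏ`-adically complete, with coproduct
and counit (c), and universal among such objects. -/
structure FGLAlg where
  A : Type
  [ringA : Ring A]
  [algA : Algebra (Rk k) A]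
  g : ZMod 2 → Submodule (Rk k) A
  x : ℕ → ℕ → A
  parx : ∀ i ∈ Finset.Icc 1 n, ∀ j ∈ Finset.Icc 1 n, x i j ∈ g (pp p i j)
  rels : FGLRels k n p A x
  m2 : (A ⊗[Rk k] A) →ₗ[Rk k] (A ⊗[Rk k] A) →ₗ[Rk k] (A ⊗[Rk k] A)
  cop : A →ₗ[Rk k] A ⊗[Rk k] A
  cou : A →ₗ[Rk k] Rk k
  bialg : IsSuperBialg (Rk k) A g m2 cop cou
  copx : ∀ i ∈ Finset.Icc 1 n, ∀ j ∈ Finset.Icc 1 n,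
    cop (x i j)
      = ∑ a ∈ Finset.Icc 1 n, sg (Rk k) (pp p i a * pp p a j) • (x i a ⊗ₜ[Rk k] x a j)
  coux : ∀ i ∈ Finset.Icc 1 n, ∀ j ∈ Finset.Icc 1 n,
    cou (x i j) = if i = j then 1 else 0
  complete : CompleteWRT (Rk k) A (IhFil k n A x)
  torsionfree : ∀ a : A, (PowerSeries.X : Rk k) • a = 0 → a = 0
  topgen : TopGenBy (Rk k) A (IhFil k n A x)
    {a : A | ∃ i ∈ Finset.Icc 1 n, ∃ j ∈ Finset.Icc 1 n, a = x i j}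
  univ : ∀ (B : Type) [Ring B] [Algebra (Rk k) B] (y : ℕ → ℕ → B),
    FGLRels k n p B y → CompleteWRT (Rk k) B (IhFil k n B y) →
    ∃ φ : A →ₐ[Rk k] B, ∀ i ∈ Finset.Icc 1 n, ∀ j ∈ Finset.Icc 1 n, φ (x i j) = y i j

attribute [instance] FGLAlg.ringA FGLAlg.algA

/-- The values of the Hopf pairing on the generators (3.16)/(3.21). -/
def PairGenVals (Ua : YamaneAlg k n p) (FA : Type) [Ring FA] [Algebra (Rk k) FA]
    (x : ℕ → ℕ → FA) (B : FA →ₗ[Rk k] Ua.A →ₗ[Rk k] Rk k) : Prop :=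
  ∀ i ∈ Finset.Icc 1 n, ∀ j ∈ Finset.Icc 1 n,
    (∀ t ∈ Finset.Icc 1 (n - 1),
      B (x i j) (Ua.E t) = (if i = t ∧ j = t + 1 then 1 else 0) ∧
      B (x i j) (Ua.F t) = (if i = t + 1 ∧ j = t then 1 else 0)) ∧
    (∀ kk ∈ Finset.Icc 1 n, B (x i j) (Ua.Γg kk) = (if i = kk ∧ j = kk then 1 else 0))

/-! ### Multiparametric objects -/

section PhiDefs
variable (A : Type) [Ring A] [Algebra (Rk k) A]

/-- `T_{i,+}^Φ := 2⁻¹ ∑_ℓ (φ_{i,ℓ} − φ_{i+1,ℓ}) Γ_ℓ`. -/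
def Tpl (Γg : ℕ → A) (φ : ℕ → ℕ → Rk k) (i : ℕ) : A :=
  ∑ l ∈ Finset.Icc 1 n, (PowerSeries.C ((2 : k)⁻¹) * (φ i l - φ (i + 1) l)) • Γg l

/-- `T_{i,−}^Φ := 2⁻¹ ∑_ℓ (φ_{ℓ,i} − φ_{ℓ,i+1}) Γ_ℓ`. -/
def Tmn (Γg : ℕ → A) (φ : ℕ → ℕ → Rk k) (i : ℕ) : A :=
  ∑ l ∈ Finset.Icc 1 n, (PowerSeries.C ((2 : k)⁻¹) * (φ l i - φ l (i + 1))) • Γg l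

/-- The defining relations of the multiparametric QFSHSA `F_ℏ^Φ[[GL_n^p]]`
(Theorem 3.10(a)), with `q_{r,s} := e^{ℏ φ_{r,s}}`. -/
structure FGLPhiRels (φ : ℕ → ℕ → Rk k) (x : ℕ → ℕ → A) : Prop where
  sq : ∀ i ∈ Finset.Icc 1 n, ∀ j ∈ Finset.Icc 1 n, pp p i j = 1 → x i j ^ 2 = 0
  row : ∀ i ∈ Finset.Icc 1 n, ∀ j ∈ Finset.Icc 1 n, ∀ k' ∈ Finset.Icc 1 n, j < k' →
    x i j * x i k'
      = (sg (Rk k) (pp p i j * pp p i k') * qpar k p i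
          * expOf k (-(PowerSeries.X * φ j k'))) • (x i k' * x i j)
  col : ∀ i ∈ Finset.Icc 1 n, ∀ h ∈ Finset.Icc 1 n, ∀ j ∈ Finset.Icc 1 n, i < h →
    x i j * x h j
      = (sg (Rk k) (pp p i j * pp p h j) * qpar k p j
          * expOf k (PowerSeries.X * φ i h)) • (x h j * x i j)
  anti : ∀ i ∈ Finset.Icc 1 n, ∀ h ∈ Finset.Icc 1 n, ∀ j ∈ Finset.Icc 1 n,
    ∀ k' ∈ Finset.Icc 1 n, i < h → k' < j →
    x i j * x h k'
      = (sg (Rk k) (pp p i j * pp p h k') * expOf k (PowerSeries.X * φ i h)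
          * expOf k (-(PowerSeries.X * φ j k'))) • (x h k' * x i j)
  syn : ∀ i ∈ Finset.Icc 1 n, ∀ h ∈ Finset.Icc 1 n, ∀ j ∈ Finset.Icc 1 n,
    ∀ k' ∈ Finset.Icc 1 n, i < h → j < k' →
    x i j * x h k'
      = (sg (Rk k) (pp p i j * pp p h k') * expOf k (PowerSeries.X * φ i h)
          * expOf k (-(PowerSeries.X * φ j k'))) • (x h k' * x i j)
        + (sg (Rk k) (pp p i j * pp p i k') * (qpar k p i - qparInv k p i)
            * expOf k (-(PowerSeries.X * φ j k'))) • (x i k' * x h j)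

end PhiDefs

/-- The multiparametric QFSHSA `F_ℏ^Φ[[GL_n^p]]` of Theorem 3.10. -/
structure FGLPhiAlg (φ : ℕ → ℕ → Rk k) where
  A : Type
  [ringA : Ring A]
  [algA : Algebra (Rk k) A]
  g : ZMod 2 → Submodule (Rk k) A
  x : ℕ → ℕ → A
  parx : ∀ i ∈ Finset.Icc 1 n, ∀ j ∈ Finset.Icc 1 n, x i j ∈ g (pp p i j)
  rels : FGLPhiRels k n p A φ x
  m2 : (A ⊗[Rk k] A) →ₗ[Rk k] (A ⊗[Rk k] A) →ₗ[Rk k] (A ⊗[Rk k] A)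
  cop : A →ₗ[Rk k] A ⊗[Rk k] A
  cou : A →ₗ[Rk k] Rk k
  bialg : IsSuperBialg (Rk k) A g m2 cop cou
  copx : ∀ i ∈ Finset.Icc 1 n, ∀ j ∈ Finset.Icc 1 n,
    cop (x i j)
      = ∑ a ∈ Finset.Icc 1 n, sg (Rk k) (pp p i a * pp p a j) • (x i a ⊗ₜ[Rk k] x a j)
  coux : ∀ i ∈ Finset.Icc 1 n, ∀ j ∈ Finset.Icc 1 n,
    cou (x i j) = if i = j then 1 else 0
  complete : CompleteWRT (Rk k) A (IhFil k n A x)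
  torsionfree : ∀ a : A, (PowerSeries.X : Rk k) • a = 0 → a = 0
  topgen : TopGenBy (Rk k) A (IhFil k n A x)
    {a : A | ∃ i ∈ Finset.Icc 1 n, ∃ j ∈ Finset.Icc 1 n, a = x i j}
  univ : ∀ (B : Type) [Ring B] [Algebra (Rk k) B] (y : ℕ → ℕ → B),
    FGLPhiRels k n p B φ y → CompleteWRT (Rk k) B (IhFil k n B y) →
    ∃ ψ : A →ₐ[Rk k] B, ∀ i ∈ Finset.Icc 1 n, ∀ j ∈ Finset.Icc 1 n, ψ (x i j) = y i j

attribute [instance] FGLPhiAlg.ringA FGLPhiAlg.algA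

/-- The formulas of Theorem 2.7 for the multiparametric Hopf structure on the
generators of `U_ℏ^Φ(gl_n^p)`. -/
def YamanePhiFormulas (φ : ℕ → ℕ → Rk k) (U : YamaneAlg k n p)
    (cop : U.A →ₗ[Rk k] U.A ⊗[Rk k] U.A) (cou : U.A →ₗ[Rk k] Rk k)
    (St : U.A →ₗ[Rk k] U.A) : Prop :=
  (∀ i ∈ Finset.Icc 1 (n - 1),
      cop (U.E i)
        = U.E i ⊗ₜ[Rk k] U.expl (Tpl k n U.A U.Γg φ i)
          + U.expl (Hcar k p U.A U.Γg i + Tmn k n U.A U.Γg φ i) ⊗ₜ[Rk k] U.E i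
    ∧ cou (U.E i) = 0
    ∧ St (U.E i)
        = -(U.expl (-(Hcar k p U.A U.Γg i + Tmn k n U.A U.Γg φ i)) * U.E i
            * U.expl (-Tpl k n U.A U.Γg φ i))) ∧
  (∀ s ∈ Finset.Icc 1 n,
      cop (U.Γg s) = U.Γg s ⊗ₜ[Rk k] (1 : U.A) + (1 : U.A) ⊗ₜ[Rk k] U.Γg s
    ∧ cou (U.Γg s) = 0
    ∧ St (U.Γg s) = -U.Γg s) ∧
  (∀ i ∈ Finset.Icc 1 (n - 1),
      cop (U.F i)
        = U.F i ⊗ₜ[Rk k] U.expl (-(Hcar k p U.A U.Γg i + Tpl k n U.A U.Γg φ i))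
          + U.expl (-Tmn k n U.A U.Γg φ i) ⊗ₜ[Rk k] U.F i
    ∧ cou (U.F i) = 0
    ∧ St (U.F i)
        = -(U.expl (Tmn k n U.A U.Γg φ i) * U.F i
            * U.expl (Hcar k p U.A U.Γg i + Tpl k n U.A U.Γg φ i)))

/-- The multiparametric QUESA `U_ℏ^Φ(gl_n^p)`: Yamane's algebra with the twisted
Hopf superalgebra structure of Theorem 2.7. -/
structure YamanePhiHopf (φ : ℕ → ℕ → Rk k) extends YamaneAlg k n p where
  m2 : (A ⊗[Rk k] A) →ₗ[Rk k] (A ⊗[Rk k] A) →ₗ[Rk k] (A ⊗[Rk k] A)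
  cop : A →ₗ[Rk k] A ⊗[Rk k] A
  cou : A →ₗ[Rk k] Rk k
  ant : A →ₗ[Rk k] A
  bialg : IsSuperBialg (Rk k) A g m2 cop cou
  antipode : IsAntipode (Rk k) A cop cou ant
  formulas : YamanePhiFormulas k n p φ toYamaneAlg cop cou ant

/-- The argument `ℏ·2⁻¹ ∑_{t,ℓ} φ_{t,ℓ} Γ_t ⊗ Γ_ℓ` of the exponential defining
the twist `F_Φ`. -/
def twistElt (U : YamaneAlg k n p) (φ : ℕ → ℕ → Rk k) : U.A ⊗[Rk k] U.A :=
  ∑ t ∈ Finset.Icc 1 n, ∑ l ∈ Finset.Icc 1 n,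
    (PowerSeries.C ((2 : k)⁻¹) * (PowerSeries.X * φ t l)) • (U.Γg t ⊗ₜ[Rk k] U.Γg l)

/-- The `N`-th partial sum of the exponential series for the twist
`F_Φ = exp(ℏ·2⁻¹ ∑ φ_{t,ℓ} Γ_t ⊗ Γ_ℓ)`, powers being taken with respect to the
super multiplication `m2` of `U ⊗ U`. -/
def twistPartial (U : YamaneAlg k n p)
    (m2 : (U.A ⊗[Rk k] U.A) →ₗ[Rk k] (U.A ⊗[Rk k] U.A) →ₗ[Rk k] (U.A ⊗[Rk k] U.A))
    (φ : ℕ → ℕ → Rk k) (N : ℕ) : U.A ⊗[Rk k] U.A :=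
  ∑ m ∈ Finset.range N, (PowerSeries.C ((m.factorial : k)⁻¹)) •
    spow (Rk k) (U.A ⊗[Rk k] U.A) m2 ((1 : U.A) ⊗ₜ[Rk k] (1 : U.A)) (twistElt k n p U φ) m

/-- `σ` is the 2-cocycle on `F_ℏ[[GL_n^p]]` obtained by evaluation against the
twist `F_Φ`, i.e. `σ(φ,ψ) = ⟨φ ⊗ ψ, F_Φ⟩`, expressed through ℏ-adic approximation
by the partial sums of the exponential series. -/
def IsTwistEval (Ua : YamaneAlg k n p)
    (m2 : (Ua.A ⊗[Rk k] Ua.A) →ₗ[Rk k] (Ua.A ⊗[Rk k] Ua.A) →ₗ[Rk k] (Ua.A ⊗[Rk k] Ua.A))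
    (FA : Type) [Ring FA] [Algebra (Rk k) FA]
    (B2 : (FA ⊗[Rk k] FA) →ₗ[Rk k] (Ua.A ⊗[Rk k] Ua.A) →ₗ[Rk k] Rk k)
    (φ : ℕ → ℕ → Rk k) (σ : FA →ₗ[Rk k] FA →ₗ[Rk k] Rk k) : Prop :=
  ∀ (f f' : FA) (N : ℕ),
    σ f f' - B2 (f ⊗ₜ[Rk k] f') (twistPartial k n p Ua m2 φ N)
      ∈ adicFil (Rk k) (Rk k) (PowerSeries.X) N

/-! ### PBW monomials and semiclassical limits -/

/-- The ordered monomial `∏ x_{ij}^{e_{ij}}` along the enumeration `l` of the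
index pairs. -/
def monom (A : Type) [Ring A] (x : ℕ → ℕ → A) (l : List (ℕ × ℕ)) (e : (ℕ × ℕ) →₀ ℕ) : A :=
  (l.map fun ij => x ij.1 ij.2 ^ e ij).prod

/-- Exponent patterns of truncated monomials: supported in `I_n × I_n`, with
exponent at most 1 at odd places. -/
def TruncSet : Set ((ℕ × ℕ) →₀ ℕ) :=
  {e | (∀ ij : ℕ × ℕ, e ij ≠ 0 → ij.1 ∈ Finset.Icc 1 n ∧ ij.2 ∈ Finset.Icc 1 n) ∧
       ∀ ij : ℕ × ℕ, pp p ij.1 ij.2 = 1 → e ij ≤ 1}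

/-- `l` enumerates the index set `I_n × I_n` (in some chosen total order). -/
def IsEnum (l : List (ℕ × ℕ)) : Prop :=
  l.Nodup ∧ ∀ ij : ℕ × ℕ, ij ∈ l ↔ (ij.1 ∈ Finset.Icc 1 n ∧ ij.2 ∈ Finset.Icc 1 n)

/-- The relation whose `RingQuot` is the semiclassical limit `A/ℏA`. -/
def modh (A : Type) [Ring A] [Algebra (Rk k) A] : A → A → Prop :=
  fun a b => b = 0 ∧ ∃ y : A, a = (PowerSeries.X : Rk k) • y

/-- The classical formal function superalgebra `F[[GL_n^p]] = U(gl_n^p)^*`: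
the supercommutative formal series superalgebra over `k` on the matrix
coordinates `x_{ij}`, with its standard superbialgebra structure. -/
structure ClassFGL where
  A : Type
  [ringA : Ring A]
  [algA : Algebra k A]
  g : ZMod 2 → Submodule k A
  x : ℕ → ℕ → A
  parx : ∀ i ∈ Finset.Icc 1 n, ∀ j ∈ Finset.Icc 1 n, x i j ∈ g (pp p i j)
  sq : ∀ i ∈ Finset.Icc 1 n, ∀ j ∈ Finset.Icc 1 n, pp p i j = 1 → x i j ^ 2 = 0
  scomm : ∀ i ∈ Finset.Icc 1 n, ∀ h ∈ Finset.Icc 1 n, ∀ j ∈ Finset.Icc 1 n,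
    ∀ k' ∈ Finset.Icc 1 n,
    x i j * x h k' = sg k (pp p i j * pp p h k') • (x h k' * x i j)
  m2 : (A ⊗[k] A) →ₗ[k] (A ⊗[k] A) →ₗ[k] (A ⊗[k] A)
  cop : A →ₗ[k] A ⊗[k] A
  cou : A →ₗ[k] k
  bialg : IsSuperBialg k A g m2 cop cou
  copx : ∀ i ∈ Finset.Icc 1 n, ∀ j ∈ Finset.Icc 1 n,
    cop (x i j) = ∑ a ∈ Finset.Icc 1 n, sg k (pp p i a * pp p a j) • (x i a ⊗ₜ[k] x a j)
  coux : ∀ i ∈ Finset.Icc 1 n, ∀ j ∈ Finset.Icc 1 n, cou (x i j) = if i = j then 1 else 0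
  complete : CompleteWRT k A
    (fun N => (tsi k A {a : A | ∃ i ∈ Finset.Icc 1 n, ∃ j ∈ Finset.Icc 1 n,
        a = x i j - (if i = j then (1 : A) else 0)}) ^ N)
  topgen : TopGenBy k A
    (fun N => (tsi k A {a : A | ∃ i ∈ Finset.Icc 1 n, ∃ j ∈ Finset.Icc 1 n,
        a = x i j - (if i = j then (1 : A) else 0)}) ^ N)
    {a : A | ∃ i ∈ Finset.Icc 1 n, ∃ j ∈ Finset.Icc 1 n, a = x i j}
  univ : ∀ (B : Type) [Ring B] [Algebra k B] (y : ℕ → ℕ → B),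
    (∀ i ∈ Finset.Icc 1 n, ∀ j ∈ Finset.Icc 1 n, pp p i j = 1 → y i j ^ 2 = 0) →
    (∀ i ∈ Finset.Icc 1 n, ∀ h ∈ Finset.Icc 1 n, ∀ j ∈ Finset.Icc 1 n,
      ∀ k' ∈ Finset.Icc 1 n,
      y i j * y h k' = sg k (pp p i j * pp p h k') • (y h k' * y i j)) →
    CompleteWRT k B
      (fun N => (tsi k B {a : B | ∃ i ∈ Finset.Icc 1 n, ∃ j ∈ Finset.Icc 1 n,
          a = y i j - (if i = j then (1 : B) else 0)}) ^ N) →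
    ∃ ψ : A →ₐ[k] B, ∀ i ∈ Finset.Icc 1 n, ∀ j ∈ Finset.Icc 1 n, ψ (x i j) = y i j

attribute [instance] ClassFGL.ringA ClassFGL.algA

end Formal


end QGLS

namespace QGLS

/-! ### Auxiliary lemmas -/

section Aux
set_option linter.unusedSectionVars false

open PowerSeries Finset

variable {k : Type} [Field k] [CharZero k]

theorem coeff_pow_eq_zero' {g : Rk k} (hg : constantCoeff g = 0) {m j : ℕ} (h : m < j) :
    coeff m (g ^ j) = 0 := by
  have : (X : Rk k) ^ j ∣ g ^ j := pow_dvd_pow_of_dvd (X_dvd_iff.mpr hg) j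
  exact X_pow_dvd_iff.mp this m h

theorem coeff_mul_pow_eq_zero' {g h : Rk k} (hg : constantCoeff g = 0)
    (hh : constantCoeff h = 0) {m i j : ℕ} (hlt : m < i + j) :
    coeff m (g ^ i * h ^ j) = 0 := by
  have : (X : Rk k) ^ (i + j) ∣ g ^ i * h ^ j := by
    rw [pow_add]
    exact mul_dvd_mul (pow_dvd_pow_of_dvd (X_dvd_iff.mpr hg) i)
      (pow_dvd_pow_of_dvd (X_dvd_iff.mpr hh) j)
  exact X_pow_dvd_iff.mp this m hlt

theorem coeff_expOf (g : Rk k) (m : ℕ) :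
    coeff m (expOf k g)
      = ∑ j ∈ Finset.range (m + 1), ((j.factorial : k)⁻¹) * (coeff m (g ^ j)) := by
  simp [expOf]

theorem coeff_expOf' {g : Rk k} (hg : constantCoeff g = 0) {u N : ℕ} (hu : u < N) :
    coeff u (expOf k g)
      = ∑ j ∈ Finset.range N, ((j.factorial : k)⁻¹) * (coeff u (g ^ j)) := by
  rw [coeff_expOf]
  refine Finset.sum_subset (Finset.range_subset_range.mpr (by omega)) fun j _ hj => ?_
  rw [Finset.mem_range, not_lt] at hj
  rw [coeff_pow_eq_zero' hg (by omega), mul_zero]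

theorem expOf_zero : expOf k (0 : Rk k) = 1 := by
  ext m
  rw [coeff_expOf, Finset.sum_eq_single 0]
  · simp [coeff_one]
  · intro j hj hj0
    rw [zero_pow hj0, map_zero, mul_zero]
  · simp

theorem expOf_mul_expOf {g h : Rk k} (hg : constantCoeff g = 0)
    (hh : constantCoeff h = 0) :
    expOf k g * expOf k h = expOf k (g + h) := by
  ext m
  rw [coeff_mul, coeff_expOf]
  have hR : ∑ j ∈ Finset.range (m + 1), ((j.factorial : k)⁻¹) * (coeff m ((g + h) ^ j))
      = ∑ j ∈ Finset.range (m + 1), ∑ pq ∈ Finset.HasAntidiagonal.antidiagonal j,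
          ((pq.1.factorial : k)⁻¹ * (pq.2.factorial : k)⁻¹) * coeff m (g ^ pq.1 * h ^ pq.2) := by
    refine Finset.sum_congr rfl fun j _ => ?_
    rw [add_pow, map_sum, Finset.mul_sum,
      Finset.Nat.sum_antidiagonal_eq_sum_range_succ_mk
        (fun pq : ℕ × ℕ => ((pq.1.factorial : k)⁻¹ * (pq.2.factorial : k)⁻¹)
          * coeff m (g ^ pq.1 * h ^ pq.2)) j]
    refine Finset.sum_congr rfl fun i hi => ?_
    rw [Finset.mem_range, Nat.lt_succ_iff] at hi
    rw [show ((j.choose i : ℕ) : Rk k) = PowerSeries.C ((j.choose i : ℕ) : k) from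
      (map_natCast (PowerSeries.C (R := k)) _).symm, coeff_mul_C]
    simp only
    have hfact : ((j.choose i : k)) * i.factorial * (j - i).factorial = j.factorial := by
      rw_mod_cast [Nat.choose_mul_factorial_mul_factorial hi]
    have h1 : (i.factorial : k) ≠ 0 := Nat.cast_ne_zero.mpr i.factorial_ne_zero
    have h2 : ((j - i).factorial : k) ≠ 0 := Nat.cast_ne_zero.mpr (j - i).factorial_ne_zero
    have h3 : (j.factorial : k) ≠ 0 := Nat.cast_ne_zero.mpr j.factorial_ne_zero
    field_simp
    rw [← hfact]
    ring
  rw [hR]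
  have hL : ∑ pq ∈ Finset.HasAntidiagonal.antidiagonal m, coeff pq.1 (expOf k g) * coeff pq.2 (expOf k h)
      = ∑ ij ∈ Finset.range (m + 1) ×ˢ Finset.range (m + 1),
          ((ij.1.factorial : k)⁻¹ * (ij.2.factorial : k)⁻¹) * coeff m (g ^ ij.1 * h ^ ij.2) := by
    have step1 : ∀ pq ∈ Finset.HasAntidiagonal.antidiagonal m,
        coeff pq.1 (expOf k g) * coeff pq.2 (expOf k h)
          = ∑ ij ∈ Finset.range (m + 1) ×ˢ Finset.range (m + 1),
              ((ij.1.factorial : k)⁻¹ * (ij.2.factorial : k)⁻¹)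
                * (coeff pq.1 (g ^ ij.1) * coeff pq.2 (h ^ ij.2)) := by
      intro pq hpq
      rw [Finset.HasAntidiagonal.mem_antidiagonal] at hpq
      rw [coeff_expOf' hg (show pq.1 < m + 1 by omega),
        coeff_expOf' hh (show pq.2 < m + 1 by omega), Finset.sum_mul_sum]
      rw [Finset.sum_product]
      refine Finset.sum_congr rfl fun i _ => Finset.sum_congr rfl fun j _ => by ring
    rw [Finset.sum_congr rfl step1, Finset.sum_comm]
    refine Finset.sum_congr rfl fun ij _ => ?_
    rw [← Finset.mul_sum, ← coeff_mul]
  rw [hL]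
  have hdisj : (↑(Finset.range (m + 1)) : Set ℕ).PairwiseDisjoint
      (fun j => Finset.HasAntidiagonal.antidiagonal j) := by
    intro a _ b _ hab
    simp only [Finset.disjoint_left]
    intro pq hpa hpb
    rw [Finset.HasAntidiagonal.mem_antidiagonal] at hpa hpb
    omega
  rw [← Finset.sum_biUnion hdisj]
  refine (Finset.sum_subset ?_ ?_).symm
  · intro pq hpq
    simp only [Finset.mem_biUnion, Finset.HasAntidiagonal.mem_antidiagonal, Finset.mem_range] at hpq
    obtain ⟨j, hj, hpq⟩ := hpq
    simp only [Finset.mem_product, Finset.mem_range]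
    omega
  · intro pq hpq hnpq
    simp only [Finset.mem_biUnion, Finset.HasAntidiagonal.mem_antidiagonal, Finset.mem_range] at hnpq
    push_neg at hnpq
    have : m < pq.1 + pq.2 := by
      by_contra hc
      exact absurd rfl (hnpq (pq.1 + pq.2) (by omega))
    rw [coeff_mul_pow_eq_zero' hg hh this, mul_zero]

theorem mem_adicFilX {a : Rk k} {N : ℕ} (h : ∃ y : Rk k, a = PowerSeries.X ^ N * y) :
    a ∈ adicFil (Rk k) (Rk k) PowerSeries.X N := by
  obtain ⟨y, rfl⟩ := h
  exact Submodule.subset_span ⟨y, by rw [smul_eq_mul]⟩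

theorem adicFilX_coeff {a : Rk k} {N : ℕ}
    (h : a ∈ adicFil (Rk k) (Rk k) PowerSeries.X N) {m : ℕ} (hm : m < N) :
    coeff m a = 0 := by
  have hle : adicFil (Rk k) (Rk k) PowerSeries.X N ≤ Ideal.span {(X : Rk k) ^ N} := by
    rw [adicFil, Submodule.span_le]
    rintro x ⟨y, rfl⟩
    rw [smul_eq_mul]
    exact Ideal.mem_span_singleton.mpr ⟨y, rfl⟩
  exact X_pow_dvd_iff.mp (Ideal.mem_span_singleton.mp (hle h)) m hm

theorem adicFilX_sep {a : Rk k} (h : ∀ N, a ∈ adicFil (Rk k) (Rk k) PowerSeries.X N) :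
    a = 0 := by
  ext m
  rw [map_zero]
  exact adicFilX_coeff (h (m + 1)) (Nat.lt_succ_self m)

theorem expOf_sub_partial_mem {g : Rk k} (hg : constantCoeff g = 0) (N : ℕ) :
    expOf k g - ∑ m ∈ Finset.range N, PowerSeries.C ((m.factorial : k)⁻¹) * g ^ m
      ∈ adicFil (Rk k) (Rk k) PowerSeries.X N := by
  apply mem_adicFilX
  refine X_pow_dvd_iff.mpr fun m hm => ?_
  rw [map_sub, coeff_expOf' hg hm, map_sum, sub_eq_zero]
  exact Finset.sum_congr rfl fun j _ => by rw [coeff_C_mul]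

theorem sg_zero_eq (S : Type) [Ring S] : sg S 0 = 1 := if_pos rfl

theorem pp_self (p : ℕ → ZMod 2) (i : ℕ) : pp p i i = 0 := by
  have : ∀ a : ZMod 2, a + a = 0 := by decide
  exact this (p i)

end Aux

set_option maxHeartbeats 2000000 in
/-- formulas (3.19)–(3.20).  Let `σ_Φ` be the 2-cocycle on
`F_ℏ[[GL_n^p]]` obtained by evaluation against the twist
`F_Φ = exp(ℏ·2⁻¹ ∑ φ_{t,ℓ} Γ_t ⊗ Γ_ℓ)` of `U_ℏ(gl_n^p)` through the Hopf
pairing.  Then `σ_Φ(x_{i,r}, x_{ℓ,h}) = δ_{i,r} δ_{ℓ,h} e^{ℏ·2⁻¹ φ_{i,ℓ}}`, and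
consequently the `σ_Φ`-deformed product satisfies
`x_{r,s} ·_{σ_Φ} x_{ℓ,t} = e^{ℏ·2⁻¹(φ_{r,ℓ} − φ_{s,t})} · x_{r,s} x_{ℓ,t}`. -/
theorem statement8 (k : Type) [Field k] [CharZero k] (n : ℕ) (hn : 2 ≤ n)
    (p : ℕ → ZMod 2) (φ : ℕ → ℕ → Rk k) (hφ : ∀ t l : ℕ, φ t l = -φ l t)
    (U : YamaneHopf k n p) (Fa : FGLAlg k n p)
    (B : Fa.A →ₗ[Rk k] U.A →ₗ[Rk k] Rk k)
    (B2 : (Fa.A ⊗[Rk k] Fa.A) →ₗ[Rk k] (U.A ⊗[Rk k] U.A) →ₗ[Rk k] Rk k)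
    (hpair : IsBialgPairing (Rk k) Fa.A U.A Fa.g U.g Fa.cop Fa.cou U.cop U.cou B B2)
    (hvals : PairGenVals k n p U.toYamaneAlg Fa.A Fa.x B)
    (σ : Fa.A →ₗ[Rk k] Fa.A →ₗ[Rk k] Rk k)
    (hσ : IsTwistEval k n p U.toYamaneAlg U.m2 Fa.A B2 φ σ) :
    (∀ i ∈ Finset.Icc 1 n, ∀ r ∈ Finset.Icc 1 n, ∀ l ∈ Finset.Icc 1 n,
     ∀ h ∈ Finset.Icc 1 n,
      σ (Fa.x i r) (Fa.x l h)
        = (if i = r then 1 else 0) * (if l = h then 1 else 0)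
            * expOf k (PowerSeries.C ((2 : k)⁻¹) * (PowerSeries.X * φ i l))) ∧
    (∀ (σinv : Fa.A →ₗ[Rk k] Fa.A →ₗ[Rk k] Rk k),
      ConvInverse (Rk k) Fa.A Fa.g Fa.cop Fa.cou σ σinv →
      ∀ mulσ : Fa.A → Fa.A → Fa.A,
        IsCocycleDeform (Rk k) Fa.A Fa.g (fun a b => a * b) Fa.cop σ σinv mulσ →
        ∀ r ∈ Finset.Icc 1 n, ∀ s ∈ Finset.Icc 1 n, ∀ l ∈ Finset.Icc 1 n,
        ∀ t ∈ Finset.Icc 1 n,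
          mulσ (Fa.x r s) (Fa.x l t)
            = expOf k (PowerSeries.C ((2 : k)⁻¹)
                * (PowerSeries.X * (φ r l - φ s t))) • (Fa.x r s * Fa.x l t)) := by
  classical
  have hsg0 : sg (Rk k) 0 = 1 := sg_zero_eq _
  have hc0 : ∀ i l : ℕ, PowerSeries.constantCoeff
      (PowerSeries.C ((2 : k)⁻¹) * (PowerSeries.X * φ i l)) = 0 := by
    intro i l; simp
  -- pairing with 1
  have hBone : ∀ i ∈ Finset.Icc 1 n, ∀ j ∈ Finset.Icc 1 n,
      B (Fa.x i j) 1 = if i = j then 1 else 0 := by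
    intro i hi j hj
    rw [hpair.oneU, Fa.coux i hi j hj]
  -- absorbing a Γ generator
  have hBΓ : ∀ i ∈ Finset.Icc 1 n, ∀ r ∈ Finset.Icc 1 n, ∀ t ∈ Finset.Icc 1 n,
      ∀ u ∈ U.g 0, B (Fa.x i r) (U.Γg t * u)
        = (if i = t then 1 else 0) * B (Fa.x i r) u := by
    intro i hi r hr t ht u hu
    rw [hpair.mulU, Fa.copx i hi r hr, map_sum, LinearMap.sum_apply]
    have hterm : ∀ a ∈ Finset.Icc 1 n,
        B2 (sg (Rk k) (pp p i a * pp p a r) • (Fa.x i a ⊗ₜ[Rk k] Fa.x a r))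
            (U.Γg t ⊗ₜ[Rk k] u)
          = sg (Rk k) (pp p i a * pp p a r)
              * ((if i = t ∧ a = t then 1 else 0) * B (Fa.x a r) u) := by
      intro a ha
      rw [map_smul, LinearMap.smul_apply, smul_eq_mul,
        hpair.pair2 (pp p a r) 0 (Fa.x i a) (Fa.x a r) (U.Γg t) u
          (Fa.parx a ha r hr) (U.parΓ t ht),
        mul_zero, hsg0, one_mul, (hvals i hi a ha).2 t ht]
    rw [Finset.sum_congr rfl hterm,
      Finset.sum_eq_single_of_mem t ht (fun a _ hat => by simp [hat])]
    by_cases hit : i = t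
    · subst hit
      simp [pp_self, sg_zero_eq]
    · simp [hit]
  -- evaluation of B2 on pure tensors with even second slot of the U-side
  have hB2ev : ∀ l ∈ Finset.Icc 1 n, ∀ h ∈ Finset.Icc 1 n, ∀ f : Fa.A,
      ∀ u ∈ U.g 0, ∀ v : U.A,
      B2 (f ⊗ₜ[Rk k] Fa.x l h) (u ⊗ₜ[Rk k] v) = B f u * B (Fa.x l h) v := by
    intro l hl h hh f u hu v
    rw [hpair.pair2 (pp p l h) 0 f (Fa.x l h) u v (Fa.parx l hl h hh) hu,
      mul_zero, hsg0, one_mul]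
  -- structure of the powers of the twist element
  have hspow : ∀ m : ℕ, ∃ (ι : Type) (ss : Finset ι) (uu vv : ι → U.A)
      (fu fv : ι → ℕ → Rk k),
      spow (Rk k) (U.A ⊗[Rk k] U.A) U.m2 ((1 : U.A) ⊗ₜ[Rk k] (1 : U.A))
          (twistElt k n p U.toYamaneAlg φ) m = ∑ w ∈ ss, uu w ⊗ₜ[Rk k] vv w
    ∧ (∀ w ∈ ss, uu w ∈ U.g 0 ∧ vv w ∈ U.g 0
        ∧ (∀ i ∈ Finset.Icc 1 n, ∀ r ∈ Finset.Icc 1 n,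
            B (Fa.x i r) (uu w) = (if i = r then 1 else 0) * fu w i)
        ∧ (∀ l ∈ Finset.Icc 1 n, ∀ h ∈ Finset.Icc 1 n,
            B (Fa.x l h) (vv w) = (if l = h then 1 else 0) * fv w l))
    ∧ (∀ i ∈ Finset.Icc 1 n, ∀ l ∈ Finset.Icc 1 n,
        ∑ w ∈ ss, fu w i * fv w l
          = (PowerSeries.C ((2 : k)⁻¹) * (PowerSeries.X * φ i l)) ^ m) := by
    intro m
    induction m with
    | zero =>
      refine ⟨Unit, {()}, fun _ => 1, fun _ => 1, fun _ _ => 1, fun _ _ => 1,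
        by simp [spow], ?_, ?_⟩
      · intro w _
        refine ⟨U.grading.one_mem, U.grading.one_mem, ?_, ?_⟩
        · intro i hi r hr; rw [hBone i hi r hr, mul_one]
        · intro l hl h hh; rw [hBone l hl h hh, mul_one]
      · intro i _ l _; simp
    | succ m ih =>
      obtain ⟨ι, ss, uu, vv, fu, fv, hsum, hmem, hval⟩ := ih
      refine ⟨(ℕ × ℕ) × ι, (Finset.Icc 1 n ×ˢ Finset.Icc 1 n) ×ˢ ss,
        fun w => (PowerSeries.C ((2 : k)⁻¹) * (PowerSeries.X * φ w.1.1 w.1.2))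
          • (U.Γg w.1.1 * uu w.2),
        fun w => U.Γg w.1.2 * vv w.2,
        fun w i => (PowerSeries.C ((2 : k)⁻¹) * (PowerSeries.X * φ w.1.1 w.1.2))
          * ((if i = w.1.1 then 1 else 0) * fu w.2 i),
        fun w l => (if l = w.1.2 then 1 else 0) * fv w.2 l, ?_, ?_, ?_⟩
      · show U.m2 (twistElt k n p U.toYamaneAlg φ)
            (spow (Rk k) (U.A ⊗[Rk k] U.A) U.m2 ((1 : U.A) ⊗ₜ[Rk k] (1 : U.A))
              (twistElt k n p U.toYamaneAlg φ) m) = _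
        rw [hsum]
        have hLHS : U.m2 (twistElt k n p U.toYamaneAlg φ) (∑ w ∈ ss, uu w ⊗ₜ[Rk k] vv w)
            = ∑ tt ∈ Finset.Icc 1 n, ∑ ll ∈ Finset.Icc 1 n, ∑ w ∈ ss,
                (PowerSeries.C ((2 : k)⁻¹) * (PowerSeries.X * φ tt ll))
                  • U.m2 (U.Γg tt ⊗ₜ[Rk k] U.Γg ll) (uu w ⊗ₜ[Rk k] vv w) := by
          rw [twistElt]
          simp only [map_sum, LinearMap.sum_apply, map_smul, LinearMap.smul_apply]
          rw [Finset.sum_comm]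
          exact Finset.sum_congr rfl fun tt _ => Finset.sum_comm
        rw [hLHS, Finset.sum_product, Finset.sum_product]
        refine Finset.sum_congr rfl fun tt htt => Finset.sum_congr rfl fun ll hll =>
          Finset.sum_congr rfl fun w hw => ?_
        rw [U.bialg.superMul 0 0 (U.Γg tt) (U.Γg ll) (uu w) (vv w)
          (U.parΓ ll hll) (hmem w hw).1]
        rw [mul_zero, hsg0, one_smul, TensorProduct.smul_tmul']
      · rintro ⟨⟨tt, ll⟩, w⟩ hw
        rw [Finset.mem_product, Finset.mem_product] at hw
        obtain ⟨⟨htt, hll⟩, hws⟩ := hw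
        refine ⟨Submodule.smul_mem _ _ ?_, ?_, ?_, ?_⟩
        · simpa using U.grading.mul_mem (U.parΓ tt htt) ((hmem w hws).1)
        · simpa using U.grading.mul_mem (U.parΓ ll hll) ((hmem w hws).2.1)
        · intro i hi r hr
          rw [map_smul, smul_eq_mul,
            hBΓ i hi r hr tt htt (uu w) ((hmem w hws).1),
            (hmem w hws).2.2.1 i hi r hr]
          ring
        · intro l hl h hh
          rw [hBΓ l hl h hh ll hll (vv w) ((hmem w hws).2.1),
            (hmem w hws).2.2.2 l hl h hh]
          ring
      · intro i hi l hl
        rw [Finset.sum_product, Finset.sum_product]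
        rw [Finset.sum_eq_single_of_mem i hi (fun tt _ htti =>
          Finset.sum_eq_zero fun ll _ => Finset.sum_eq_zero fun w _ => by
            simp [(Ne.symm htti : i ≠ tt)])]
        rw [Finset.sum_eq_single_of_mem l hl (fun ll _ hlll =>
          Finset.sum_eq_zero fun w _ => by simp [(Ne.symm hlll : l ≠ ll)])]
        have hterm : ∀ w ∈ ss,
            (PowerSeries.C ((2 : k)⁻¹) * (PowerSeries.X * φ i l))
                * ((if i = i then 1 else 0) * fu w i)
              * ((if l = l then 1 else 0) * fv w l)
            = (PowerSeries.C ((2 : k)⁻¹) * (PowerSeries.X * φ i l))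
                * (fu w i * fv w l) := by
          intro w _
          rw [if_pos rfl, if_pos rfl]
          ring
        rw [Finset.sum_congr rfl hterm, ← Finset.mul_sum, hval i hi l hl, pow_succ]
        ring
  -- evaluation of B2 against the partial sums of the twist
  have hB2tw : ∀ i ∈ Finset.Icc 1 n, ∀ r ∈ Finset.Icc 1 n, ∀ l ∈ Finset.Icc 1 n,
      ∀ h ∈ Finset.Icc 1 n, ∀ N : ℕ,
      B2 (Fa.x i r ⊗ₜ[Rk k] Fa.x l h) (twistPartial k n p U.toYamaneAlg U.m2 φ N)
        = (if i = r then 1 else 0) * (if l = h then 1 else 0)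
            * ∑ m ∈ Finset.range N, PowerSeries.C ((m.factorial : k)⁻¹)
                * (PowerSeries.C ((2 : k)⁻¹) * (PowerSeries.X * φ i l)) ^ m := by
    intro i hi r hr l hl h hh N
    rw [twistPartial, map_sum, Finset.mul_sum]
    refine Finset.sum_congr rfl fun m _ => ?_
    obtain ⟨ι, ss, uu, vv, fu, fv, hsum, hmem, hval⟩ := hspow m
    rw [map_smul, smul_eq_mul, hsum, map_sum]
    have hterm : ∀ w ∈ ss,
        B2 (Fa.x i r ⊗ₜ[Rk k] Fa.x l h) (uu w ⊗ₜ[Rk k] vv w)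
          = ((if i = r then 1 else 0) * (if l = h then 1 else 0)) * (fu w i * fv w l) := by
      intro w hw
      rw [hB2ev l hl h hh (Fa.x i r) (uu w) ((hmem w hw).1) (vv w),
        (hmem w hw).2.2.1 i hi r hr, (hmem w hw).2.2.2 l hl h hh]
      ring
    rw [Finset.sum_congr rfl hterm, ← Finset.mul_sum, hval i hi l hl]
    ring
  -- Part 1
  have part1 : ∀ i ∈ Finset.Icc 1 n, ∀ r ∈ Finset.Icc 1 n, ∀ l ∈ Finset.Icc 1 n,
      ∀ h ∈ Finset.Icc 1 n,
      σ (Fa.x i r) (Fa.x l h)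
        = (if i = r then 1 else 0) * (if l = h then 1 else 0)
            * expOf k (PowerSeries.C ((2 : k)⁻¹) * (PowerSeries.X * φ i l)) := by
    intro i hi r hr l hl h hh
    have hmemN : ∀ N : ℕ, σ (Fa.x i r) (Fa.x l h)
        - (if i = r then 1 else 0) * (if l = h then 1 else 0)
            * expOf k (PowerSeries.C ((2 : k)⁻¹) * (PowerSeries.X * φ i l))
          ∈ adicFil (Rk k) (Rk k) PowerSeries.X N := by
      intro N
      have h1 := hσ (Fa.x i r) (Fa.x l h) N
      have h2 : (if i = r then 1 else 0) * (if l = h then 1 else 0)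
            * expOf k (PowerSeries.C ((2 : k)⁻¹) * (PowerSeries.X * φ i l))
          - B2 (Fa.x i r ⊗ₜ[Rk k] Fa.x l h) (twistPartial k n p U.toYamaneAlg U.m2 φ N)
            ∈ adicFil (Rk k) (Rk k) PowerSeries.X N := by
        rw [hB2tw i hi r hr l hl h hh N, ← mul_sub, ← smul_eq_mul]
        exact Submodule.smul_mem _ _ (expOf_sub_partial_mem (hc0 i l) N)
      have h3 := Submodule.sub_mem _ h1 h2
      convert h3 using 1
      ring
    exact sub_eq_zero.mp (adicFilX_sep hmemN)
  refine ⟨part1, ?_⟩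
  -- Part 2
  intro σinv hconv mulσ hdef r hr s hs l hl t ht
  -- canonical homogeneous representations of the coproducts
  have hrep : ∀ i ∈ Finset.Icc 1 n, ∀ j ∈ Finset.Icc 1 n,
      Rep (Rk k) Fa.A Fa.g (Fa.cop (Fa.x i j)) ℕ (Finset.Icc 1 n)
        (fun a => sg (Rk k) (pp p i a * pp p a j) • Fa.x i a) (fun a => Fa.x a j)
        (fun a => pp p i a) (fun a => pp p a j) := by
    intro i hi j hj
    refine ⟨?_, ?_⟩
    · rw [Fa.copx i hi j hj]
      exact Finset.sum_congr rfl fun a _ => (TensorProduct.smul_tmul' _ _ _)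
    · intro a ha
      exact ⟨Submodule.smul_mem _ _ (Fa.parx i hi a ha), Fa.parx a ha j hj⟩
  -- the values of the convolution inverse on the generators
  have hinv : ∀ i ∈ Finset.Icc 1 n, ∀ j ∈ Finset.Icc 1 n, ∀ l' ∈ Finset.Icc 1 n,
      ∀ h ∈ Finset.Icc 1 n,
      σinv (Fa.x i j) (Fa.x l' h)
        = (if i = j then 1 else 0) * (if l' = h then 1 else 0)
            * expOf k (-(PowerSeries.C ((2 : k)⁻¹) * (PowerSeries.X * φ i l'))) := by
    intro i hi j hj l' hl' h hh
    have hc2 : (∑ α ∈ Finset.Icc 1 n, ∑ β ∈ Finset.Icc 1 n,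
        sg (Rk k) (pp p α j * pp p l' β)
          * (σ (sg (Rk k) (pp p i α * pp p α j) • Fa.x i α)
              (sg (Rk k) (pp p l' β * pp p β h) • Fa.x l' β)
            * σinv (Fa.x α j) (Fa.x β h)))
        = Fa.cou (Fa.x i j) * Fa.cou (Fa.x l' h) :=
      (hconv (Fa.x i j) (Fa.x l' h) ℕ (Finset.Icc 1 n) _ _ _ _ (hrep i hi j hj)
        ℕ (Finset.Icc 1 n) _ _ _ _ (hrep l' hl' h hh)).1
    have hkey : expOf k (PowerSeries.C ((2 : k)⁻¹) * (PowerSeries.X * φ i l'))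
          * σinv (Fa.x i j) (Fa.x l' h)
        = (if i = j then 1 else 0) * (if l' = h then 1 else 0) := by
      rw [← Fa.coux i hi j hj, ← Fa.coux l' hl' h hh, ← hc2]
      rw [Finset.sum_eq_single_of_mem i hi (fun b hb hbi =>
        Finset.sum_eq_zero fun β hβ => by
          simp only [map_smul, LinearMap.smul_apply, smul_eq_mul]
          rw [part1 i hi b hb l' hl' β hβ]
          simp [show ¬ (i = b) from fun hx => hbi hx.symm])]
      rw [Finset.sum_eq_single_of_mem l' hl' (fun β hβ hβl => by
          simp only [map_smul, LinearMap.smul_apply, smul_eq_mul]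
          rw [part1 i hi i hi l' hl' β hβ]
          simp [show ¬ (l' = β) from fun hx => hβl hx.symm])]
      simp only [map_smul, LinearMap.smul_apply, smul_eq_mul]
      rw [part1 i hi i hi l' hl' l' hl']
      simp only [pp_self, zero_mul, mul_zero, sg_zero_eq, one_mul,
        eq_self_iff_true, if_true]
    have hneg0 : PowerSeries.constantCoeff
        (-(PowerSeries.C ((2 : k)⁻¹) * (PowerSeries.X * φ i l'))) = 0 := by
      rw [map_neg, hc0 i l', neg_zero]
    have hstep := congrArg
      (fun z => expOf k (-(PowerSeries.C ((2 : k)⁻¹) * (PowerSeries.X * φ i l'))) * z) hkey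
    rw [← mul_assoc, expOf_mul_expOf hneg0 (hc0 i l'), neg_add_cancel, expOf_zero,
      one_mul] at hstep
    rw [hstep]
    ring
  -- the canonical Rep3's
  have hrep3 : ∀ a ∈ Finset.Icc 1 n, ∀ b ∈ Finset.Icc 1 n,
      Rep3 (Rk k) Fa.A Fa.g Fa.cop (Fa.x a b) (ℕ × ℕ)
        (Finset.Icc 1 n ×ˢ Finset.Icc 1 n)
        (fun w => (sg (Rk k) (pp p a w.1 * pp p w.1 b)
            * sg (Rk k) (pp p a w.2 * pp p w.2 w.1)) • Fa.x a w.2)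
        (fun w => Fa.x w.2 w.1) (fun w => Fa.x w.1 b)
        (fun w => pp p a w.2) (fun w => pp p w.2 w.1) (fun w => pp p w.1 b) := by
    intro a ha b hb
    refine ⟨?_, ?_⟩
    · rw [Fa.copx a ha b hb, map_sum, Finset.sum_product]
      refine Finset.sum_congr rfl fun α hα => ?_
      rw [map_smul, TensorProduct.map_tmul, LinearMap.id_coe, id_eq, Fa.copx a ha α hα,
        TensorProduct.sum_tmul, Finset.smul_sum]
      refine Finset.sum_congr rfl fun β hβ => ?_
      rw [TensorProduct.smul_tmul', ← TensorProduct.smul_tmul', ← TensorProduct.smul_tmul',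
        smul_smul]
      rw [TensorProduct.smul_tmul', TensorProduct.smul_tmul']
    · rintro ⟨α, β⟩ hw
      rw [Finset.mem_product] at hw
      exact ⟨Submodule.smul_mem _ _ (Fa.parx a ha β hw.2), Fa.parx β hw.2 α hw.1,
        Fa.parx α hw.1 b hb⟩
  -- the deformed product formula, instantiated
  have hfin := hdef (Fa.x r s) (Fa.x l t) (ℕ × ℕ)
    (Finset.Icc 1 n ×ˢ Finset.Icc 1 n) _ _ _ _ _ _ (hrep3 r hr s hs) (ℕ × ℕ)
    (Finset.Icc 1 n ×ˢ Finset.Icc 1 n) _ _ _ _ _ _ (hrep3 l hl t ht)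
  rw [hfin]
  have hzero : ∀ w ∈ Finset.Icc 1 n ×ˢ Finset.Icc 1 n,
      ∀ w' ∈ Finset.Icc 1 n ×ˢ Finset.Icc 1 n, (¬ (w.1 = s ∧ w.2 = r)) ∨ (¬ (w'.1 = t ∧ w'.2 = l)) →
      (sg (Rk k) (pp p l w'.2 * (pp p w.2 w.1 + pp p w.1 s) + pp p w'.2 w'.1 * pp p w.1 s)
        * (σ ((sg (Rk k) (pp p r w.1 * pp p w.1 s)
              * sg (Rk k) (pp p r w.2 * pp p w.2 w.1)) • Fa.x r w.2)
             ((sg (Rk k) (pp p l w'.1 * pp p w'.1 t)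
              * sg (Rk k) (pp p l w'.2 * pp p w'.2 w'.1)) • Fa.x l w'.2)
          * σinv (Fa.x w.1 s) (Fa.x w'.1 t)))
        • (Fa.x w.2 w.1 * Fa.x w'.2 w'.1) = 0 := by
    intro w hw w' hw' hcase
    rw [Finset.mem_product] at hw hw'
    simp only [map_smul, LinearMap.smul_apply, smul_eq_mul]
    rw [part1 r hr w.2 hw.2 l hl w'.2 hw'.2, hinv w.1 hw.1 s hs w'.1 hw'.1 t ht]
    rcases hcase with hcase | hcase
    · by_cases h1 : w.1 = s
      · have h2 : ¬ (w.2 = r) := fun h2 => hcase ⟨h1, h2⟩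
        simp [show ¬ (r = w.2) from fun hx => h2 hx.symm]
      · simp [h1]
    · by_cases h1 : w'.1 = t
      · have h2 : ¬ (w'.2 = l) := fun h2 => hcase ⟨h1, h2⟩
        simp [show ¬ (l = w'.2) from fun hx => h2 hx.symm]
      · simp [h1]
  have hone : (∑ w ∈ Finset.Icc 1 n ×ˢ Finset.Icc 1 n,
      ∑ w' ∈ Finset.Icc 1 n ×ˢ Finset.Icc 1 n,
      (sg (Rk k) (pp p l w'.2 * (pp p w.2 w.1 + pp p w.1 s) + pp p w'.2 w'.1 * pp p w.1 s)
        * (σ ((sg (Rk k) (pp p r w.1 * pp p w.1 s)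
              * sg (Rk k) (pp p r w.2 * pp p w.2 w.1)) • Fa.x r w.2)
             ((sg (Rk k) (pp p l w'.1 * pp p w'.1 t)
              * sg (Rk k) (pp p l w'.2 * pp p w'.2 w'.1)) • Fa.x l w'.2)
          * σinv (Fa.x w.1 s) (Fa.x w'.1 t)))
        • (Fa.x w.2 w.1 * Fa.x w'.2 w'.1))
      = expOf k (PowerSeries.C ((2 : k)⁻¹)
          * (PowerSeries.X * (φ r l - φ s t))) • (Fa.x r s * Fa.x l t) := by
    rw [Finset.sum_eq_single_of_mem ((s, r) : ℕ × ℕ)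
      (Finset.mem_product.mpr ⟨hs, hr⟩) (fun w hw hne =>
        Finset.sum_eq_zero fun w' hw' => hzero w hw w' hw'
          (Or.inl (fun hx => hne (by
            have := hx.1; have := hx.2
            exact Prod.ext hx.1 hx.2))))]
    rw [Finset.sum_eq_single_of_mem ((t, l) : ℕ × ℕ)
      (Finset.mem_product.mpr ⟨ht, hl⟩) (fun w' hw' hne =>
        hzero (s, r) (Finset.mem_product.mpr ⟨hs, hr⟩) w' hw'
          (Or.inr (fun hx => hne (Prod.ext hx.1 hx.2))))]
    simp only [map_smul, LinearMap.smul_apply, smul_eq_mul]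
    rw [part1 r hr r hr l hl l hl, hinv s hs s hs t ht t ht]
    have hexp : expOf k (PowerSeries.C ((2 : k)⁻¹) * (PowerSeries.X * φ r l))
          * expOf k (-(PowerSeries.C ((2 : k)⁻¹) * (PowerSeries.X * φ s t)))
        = expOf k (PowerSeries.C ((2 : k)⁻¹) * (PowerSeries.X * (φ r l - φ s t))) := by
      rw [expOf_mul_expOf (hc0 r l) (by rw [map_neg, hc0 s t, neg_zero])]
      congr 1
      ring
    simp only [pp_self, zero_mul, mul_zero, zero_add, add_zero, sg_zero_eq, one_mul,
      mul_one, eq_self_iff_true, if_true]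
    rw [← hexp]
  exact hone

end QGLS
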